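/- Let d ≥ 1, M ≥ 0, let G : ℝ^d × ℝ → ℝ and ρ : ℝ^d → ℝ be differentiable, and assume: ρ(y) = G(y, ρ(y)) for all y ∈ ℝ^d; |∂G/∂τ (y, τ)| ≤ 1/2 for all (y, τ) ∈ ℝ^d × ℝ; and |∂ρ/∂y^i (y)| ≤ M for all y and all i ∈ {1,…,d}. Then for all y, z ∈ ℝ^d and each i ∈ {1,…,d}, |∂_i ρ(y) − ∂_i ρ(z)| ≤ 2 |∂_{y^i} G(y, ρ(y)) − ∂_{y^i} G(z, ρ(z))| + 2M |∂_τ G(y, ρ(y)) − ∂_τ G(z, ρ(z))|. -/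

import Mathlib

/-- Derivative-difference estimate (A.1) for the fixed point `ρ(y) = G(y, ρ(y))`
(chain rule, proof of Theorem 3.1): if `|∂_τ G| ≤ 1/2` everywhere and `|∂_i ρ| ≤ M`,
then for all `y, z` and each coordinate direction `i`,
`|∂_i ρ(y) - ∂_i ρ(z)| ≤ 2 |∂_{y^i} G(y, ρ(y)) - ∂_{y^i} G(z, ρ(z))|
  + 2M |∂_τ G(y, ρ(y)) - ∂_τ G(z, ρ(z))|`. -/
theorem fixed_point_gradient_difference (d : ℕ) (hd : 1 ≤ d) (M : ℝ) (hM : 0 ≤ M)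
    (G : EuclideanSpace ℝ (Fin d) × ℝ → ℝ) (ρ : EuclideanSpace ℝ (Fin d) → ℝ)
    (hGdiff : Differentiable ℝ G) (hρdiff : Differentiable ℝ ρ)
    (hfix : ∀ y, ρ y = G (y, ρ y))
    (hGτ : ∀ (y : EuclideanSpace ℝ (Fin d)) (τ : ℝ),
      |fderiv ℝ G (y, τ) ((0 : EuclideanSpace ℝ (Fin d)), (1 : ℝ))| ≤ 1 / 2)
    (hρbd : ∀ (y : EuclideanSpace ℝ (Fin d)) (i : Fin d),
      |fderiv ℝ ρ y (EuclideanSpace.single i 1)| ≤ M) :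
    ∀ (y z : EuclideanSpace ℝ (Fin d)) (i : Fin d),
      |fderiv ℝ ρ y (EuclideanSpace.single i 1) -
          fderiv ℝ ρ z (EuclideanSpace.single i 1)| ≤
        2 * |fderiv ℝ G (y, ρ y) ((EuclideanSpace.single i 1 : EuclideanSpace ℝ (Fin d)), (0 : ℝ)) -
              fderiv ℝ G (z, ρ z) ((EuclideanSpace.single i 1 : EuclideanSpace ℝ (Fin d)), (0 : ℝ))| +
        2 * M * |fderiv ℝ G (y, ρ y) ((0 : EuclideanSpace ℝ (Fin d)), (1 : ℝ)) -
              fderiv ℝ G (z, ρ z) ((0 : EuclideanSpace ℝ (Fin d)), (1 : ℝ))| := by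
  -- chain rule identity
  have key : ∀ (y : EuclideanSpace ℝ (Fin d)) (v : EuclideanSpace ℝ (Fin d)),
      fderiv ℝ ρ y v = fderiv ℝ G (y, ρ y) (v, (0:ℝ)) +
        (fderiv ℝ ρ y v) * fderiv ℝ G (y, ρ y) ((0 : EuclideanSpace ℝ (Fin d)), (1:ℝ)) := by
    intro y v
    have hpair : HasFDerivAt (fun x : EuclideanSpace ℝ (Fin d) => (x, ρ x))
        ((ContinuousLinearMap.id ℝ _).prod (fderiv ℝ ρ y)) y :=
      HasFDerivAt.prodMk (hasFDerivAt_id y) (hρdiff y).hasFDerivAt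
    have hcomp : HasFDerivAt ρ
        ((fderiv ℝ G (y, ρ y)).comp ((ContinuousLinearMap.id ℝ _).prod (fderiv ℝ ρ y))) y := by
      have := ((hGdiff (y, ρ y)).hasFDerivAt).comp y hpair
      exact this.congr_of_eventuallyEq (Filter.Eventually.of_forall fun x => (hfix x))
    have hρeq : fderiv ℝ ρ y =
        (fderiv ℝ G (y, ρ y)).comp ((ContinuousLinearMap.id ℝ _).prod (fderiv ℝ ρ y)) :=
      hcomp.fderiv
    conv_lhs => rw [hρeq]
    have hsplit : ((v, fderiv ℝ ρ y v) : EuclideanSpace ℝ (Fin d) × ℝ)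
        = (v, (0:ℝ)) + (fderiv ℝ ρ y v) • ((0 : EuclideanSpace ℝ (Fin d)), (1:ℝ)) := by
      simp
    simp only [ContinuousLinearMap.comp_apply, ContinuousLinearMap.prod_apply,
      ContinuousLinearMap.id_apply]
    rw [hsplit, map_add, map_smul, smul_eq_mul]
  intro y z i
  set a := fderiv ℝ ρ y (EuclideanSpace.single i 1)
  set b := fderiv ℝ ρ z (EuclideanSpace.single i 1)
  set Ay := fderiv ℝ G (y, ρ y) ((EuclideanSpace.single i 1 : EuclideanSpace ℝ (Fin d)), (0:ℝ))
  set Az := fderiv ℝ G (z, ρ z) ((EuclideanSpace.single i 1 : EuclideanSpace ℝ (Fin d)), (0:ℝ))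
  set By := fderiv ℝ G (y, ρ y) ((0 : EuclideanSpace ℝ (Fin d)), (1:ℝ))
  set Bz := fderiv ℝ G (z, ρ z) ((0 : EuclideanSpace ℝ (Fin d)), (1:ℝ))
  have ha : a = Ay + a * By := key y _
  have hb : b = Az + b * Bz := key z _
  have hBz : |Bz| ≤ 1/2 := hGτ z (ρ z)
  have haM : |a| ≤ M := hρbd y i
  have hdiff : a - b = (Ay - Az) + a * (By - Bz) + (a - b) * Bz := by
    nlinarith [ha, hb]
  have h1 : |a - b| ≤ |Ay - Az| + |a| * |By - Bz| + |a - b| * |Bz| := by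
    calc |a - b| = |(Ay - Az) + a * (By - Bz) + (a - b) * Bz| := by rw [← hdiff]
    _ ≤ |(Ay - Az) + a * (By - Bz)| + |(a - b) * Bz| := abs_add_le _ _
    _ ≤ |Ay - Az| + |a * (By - Bz)| + |(a - b) * Bz| := by linarith [abs_add_le (Ay - Az) (a * (By - Bz))]
    _ = |Ay - Az| + |a| * |By - Bz| + |a - b| * |Bz| := by rw [abs_mul, abs_mul]
  have h2 : |a| * |By - Bz| ≤ M * |By - Bz| :=
    mul_le_mul_of_nonneg_right haM (abs_nonneg _)
  have h3 : |a - b| * |Bz| ≤ |a - b| * (1/2) :=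
    mul_le_mul_of_nonneg_left hBz (abs_nonneg _)
  linarith
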